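/- arXiv:1401.4082 — 4 statements merged into one kernel-verified Lean document; each statement's English description precedes it below -/
import Mathlib

section
/- Price's theorem (1D case): Let f : ℝ → ℝ be twice continuously differentiable with f, f', f'' of at most polynomial growth. Then the derivative with respect to the variance v > 0 of the expectation of f under a Gaussian N(0, v) equals one half the expectation of the second derivative: ∂/∂v ∫ f(ξ) N(ξ|0,v) dξ = (1/2) ∫ f''(ξ) N(ξ|0,v) dξ. -/
open MeasureTheory Real

/-- Centered one-dimensional Gaussian density `N(ξ | 0, v)` with variance `v`. -/
noncomputable def gaussDensityVar (v x : ℝ) : ℝ :=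
  (1 / Real.sqrt (2 * Real.pi * v)) * Real.exp (-(x ^ 2) / (2 * v))

/-- At most polynomial growth. -/
def PolyGrowth (f : ℝ → ℝ) : Prop :=
  ∃ C : ℝ, ∃ n : ℕ, ∀ x, |f x| ≤ C * (1 + |x|) ^ n

lemma pg_pow_le (x : ℝ) (n : ℕ) : (1 + |x|) ^ n ≤ 2 ^ n * (1 + |x| ^ n) := by
  have h1 : (1 + |x|) ^ n ≤ (2 * max 1 |x|) ^ n := by
    apply pow_le_pow_left₀ (by positivity)
    rcases le_total |x| 1 with h | h
    · calc 1 + |x| ≤ 2 := by linarith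
        _ ≤ 2 * max 1 |x| := by nlinarith [le_max_left 1 |x|]
    · calc 1 + |x| ≤ 2 * |x| := by linarith
        _ ≤ 2 * max 1 |x| := by nlinarith [le_max_right 1 |x|]
  have h2 : (max 1 |x|) ^ n ≤ 1 + |x| ^ n := by
    rcases max_cases 1 |x| with ⟨he, _⟩ | ⟨he, _⟩ <;> rw [he]
    · simp only [one_pow]
      exact le_add_of_nonneg_right (pow_nonneg (abs_nonneg x) n)
    · exact le_add_of_nonneg_left zero_le_one
  calc (1 + |x|) ^ n ≤ (2 * max 1 |x|) ^ n := h1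
    _ = 2 ^ n * (max 1 |x|) ^ n := by rw [mul_pow]
    _ ≤ 2 ^ n * (1 + |x| ^ n) := by
        apply mul_le_mul_of_nonneg_left h2 (by positivity)

lemma integrable_pg_exp {g : ℝ → ℝ} (hg : Continuous g) (hgp : PolyGrowth g)
    {b : ℝ} (hb : 0 < b) : Integrable fun x => g x * Real.exp (-b * x ^ 2) := by
  obtain ⟨C, n, hC⟩ := hgp
  have hpow : Integrable fun x : ℝ => x ^ (2 * n) * Real.exp (-b * x ^ 2) := by
    have h := integrable_rpow_mul_exp_neg_mul_sq hb (s := ((2 * n : ℕ) : ℝ))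
      (lt_of_lt_of_le neg_one_lt_zero (Nat.cast_nonneg _))
    simpa only [Real.rpow_natCast] using h
  have habs : Integrable fun x : ℝ => |x| ^ n * Real.exp (-b * x ^ 2) := by
    refine ((integrable_exp_neg_mul_sq hb).add hpow).mono'
      ((continuous_abs.pow n).mul (by continuity)).aestronglyMeasurable
      (Filter.Eventually.of_forall fun x => ?_)
    have he : (0:ℝ) < Real.exp (-b * x ^ 2) := Real.exp_pos _
    rw [Real.norm_eq_abs, abs_mul, abs_of_pos he, abs_of_nonneg (pow_nonneg (abs_nonneg x) n)]
    have hle : |x| ^ n ≤ 1 + x ^ (2 * n) := by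
      rcases le_total |x| 1 with h | h
      · have : |x| ^ n ≤ 1 := pow_le_one₀ (abs_nonneg x) h
        have h2 : (0:ℝ) ≤ x ^ (2 * n) := (even_two_mul n).pow_nonneg x
        linarith
      · have h1 : |x| ^ n ≤ |x| ^ (2 * n) :=
          pow_le_pow_right₀ h (by omega)
        have h2 : |x| ^ (2 * n) = x ^ (2 * n) := by
          rw [← abs_pow]
          exact abs_of_nonneg ((even_two_mul n).pow_nonneg x)
        linarith
    calc |x| ^ n * Real.exp (-b * x ^ 2)
        ≤ (1 + x ^ (2*n)) * Real.exp (-b * x ^ 2) := by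
          apply mul_le_mul_of_nonneg_right hle he.le
      _ = Real.exp (-b * x ^ 2) + x ^ (2*n) * Real.exp (-b * x ^ 2) := by ring
  have hbound : Integrable fun x : ℝ =>
      |C| * 2 ^ n * (Real.exp (-b * x ^ 2) + |x| ^ n * Real.exp (-b * x ^ 2)) :=
    ((integrable_exp_neg_mul_sq hb).add habs).const_mul _
  refine hbound.mono' (hg.mul (by continuity)).aestronglyMeasurable
    (Filter.Eventually.of_forall fun x => ?_)
  have h1 : |g x| ≤ |C| * (1 + |x|) ^ n :=
    (hC x).trans (mul_le_mul_of_nonneg_right (le_abs_self C) (by positivity))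
  have h2 := pg_pow_le x n
  have he : (0:ℝ) < Real.exp (-b * x ^ 2) := Real.exp_pos _
  rw [Real.norm_eq_abs, abs_mul, abs_of_pos he]
  calc |g x| * Real.exp (-b * x ^ 2) ≤ |C| * (1 + |x|) ^ n * Real.exp (-b * x ^ 2) := by
        apply mul_le_mul_of_nonneg_right h1 he.le
    _ ≤ |C| * (2 ^ n * (1 + |x| ^ n)) * Real.exp (-b * x ^ 2) := by
        apply mul_le_mul_of_nonneg_right _ he.le
        apply mul_le_mul_of_nonneg_left h2 (abs_nonneg C)
    _ = |C| * 2 ^ n * (Real.exp (-b * x ^ 2) + |x| ^ n * Real.exp (-b * x ^ 2)) := by ring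

lemma PolyGrowth.mul' {g h : ℝ → ℝ} (hg : PolyGrowth g) (hh : PolyGrowth h) :
    PolyGrowth (fun x => g x * h x) := by
  obtain ⟨C, n, hC⟩ := hg
  obtain ⟨D, m, hD⟩ := hh
  refine ⟨|C| * |D|, n + m, fun x => ?_⟩
  have h1 : |g x| ≤ |C| * (1 + |x|) ^ n :=
    (hC x).trans (mul_le_mul_of_nonneg_right (le_abs_self C) (by positivity))
  have h2 : |h x| ≤ |D| * (1 + |x|) ^ m :=
    (hD x).trans (mul_le_mul_of_nonneg_right (le_abs_self D) (by positivity))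
  calc |g x * h x| = |g x| * |h x| := abs_mul _ _
    _ ≤ (|C| * (1 + |x|) ^ n) * (|D| * (1 + |x|) ^ m) := by
        apply mul_le_mul h1 h2 (abs_nonneg _) (by positivity)
    _ = |C| * |D| * (1 + |x|) ^ (n + m) := by rw [pow_add]; ring

lemma integrable_pg_gauss {g : ℝ → ℝ} (hg : Continuous g) (hgp : PolyGrowth g)
    {v : ℝ} (hv : 0 < v) : Integrable fun x => g x * gaussDensityVar v x := by
  have key : Integrable fun x => (g x * (1 / Real.sqrt (2 * Real.pi * v))) *
      Real.exp (-(1/(2*v)) * x ^ 2) := by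
    apply integrable_pg_exp (by fun_prop) _ (by positivity)
    obtain ⟨C, n, hC⟩ := hgp
    refine ⟨|C| * (1 / Real.sqrt (2 * Real.pi * v)), n, fun x => ?_⟩
    rw [abs_mul, abs_of_pos (by positivity : (0:ℝ) < 1 / Real.sqrt (2 * Real.pi * v))]
    have h1 : |g x| ≤ |C| * (1 + |x|) ^ n :=
      (hC x).trans (mul_le_mul_of_nonneg_right (le_abs_self C) (by positivity))
    calc |g x| * (1 / Real.sqrt (2 * Real.pi * v))
        ≤ (|C| * (1 + |x|) ^ n) * (1 / Real.sqrt (2 * Real.pi * v)) := by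
          apply mul_le_mul_of_nonneg_right h1 (by positivity)
      _ = |C| * (1 / Real.sqrt (2 * Real.pi * v)) * (1 + |x|) ^ n := by ring
  refine key.congr (Filter.Eventually.of_forall fun x => ?_)
  unfold gaussDensityVar
  field_simp

lemma gauss_continuous (v : ℝ) : Continuous (fun x => gaussDensityVar v x) := by
  unfold gaussDensityVar
  fun_prop

lemma gauss_pos {v : ℝ} (hv : 0 < v) (x : ℝ) : 0 < gaussDensityVar v x := by
  unfold gaussDensityVar
  have : (0:ℝ) < Real.sqrt (2 * Real.pi * v) := Real.sqrt_pos.mpr (by positivity)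
  positivity

lemma hasDerivAt_gauss_x {v : ℝ} (hv : 0 < v) (x : ℝ) :
    HasDerivAt (fun y => gaussDensityVar v y) (gaussDensityVar v x * (-(x / v))) x := by
  have hinner : HasDerivAt (fun y : ℝ => -(y ^ 2) / (2 * v)) (-(x / v)) x := by
    have h := ((hasDerivAt_pow 2 x).neg).div_const (2 * v)
    refine h.congr_deriv ?_
    field_simp
    ring
  have h := (hinner.exp).const_mul (1 / Real.sqrt (2 * Real.pi * v))
  refine h.congr_deriv ?_
  unfold gaussDensityVar
  ring

lemma hasDerivAt_gauss_xx {v : ℝ} (hv : 0 < v) (x : ℝ) :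
    HasDerivAt (fun y => gaussDensityVar v y * (-(y / v)))
      (gaussDensityVar v x * (x ^ 2 / v ^ 2 - 1 / v)) x := by
  have hlin : HasDerivAt (fun y : ℝ => -(y / v)) (-(1 / v)) x := by
    exact ((hasDerivAt_id x).div_const v).neg
  have h := (hasDerivAt_gauss_x hv x).mul hlin
  refine h.congr_deriv ?_
  field_simp
  ring

lemma hasDerivAt_gauss_w (x : ℝ) {w : ℝ} (hw : 0 < w) :
    HasDerivAt (fun u => gaussDensityVar u x)
      (gaussDensityVar w x * (x ^ 2 / (2 * w ^ 2) - 1 / (2 * w))) w := by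
  have h2pi : (0:ℝ) < 2 * Real.pi := by positivity
  have hs : (0:ℝ) < Real.sqrt (2 * Real.pi * w) := Real.sqrt_pos.mpr (by positivity)
  have hsq : Real.sqrt (2 * Real.pi * w) ^ 2 = 2 * Real.pi * w :=
    Real.sq_sqrt (by positivity)
  have h1 : HasDerivAt (fun u : ℝ => Real.sqrt (2 * Real.pi * u))
      (1 / (2 * Real.sqrt (2 * Real.pi * w)) * (2 * Real.pi)) w := by
    have hin : HasDerivAt (fun u : ℝ => 2 * Real.pi * u) (2 * Real.pi) w := by
      simpa using (hasDerivAt_id w).const_mul (2 * Real.pi)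
    exact (Real.hasDerivAt_sqrt (by positivity)).comp w hin
  have h1' : HasDerivAt (fun u : ℝ => (Real.sqrt (2 * Real.pi * u))⁻¹)
      (-(1 / (2 * Real.sqrt (2 * Real.pi * w)) * (2 * Real.pi)) /
        (Real.sqrt (2 * Real.pi * w)) ^ 2) w := h1.inv hs.ne'
  have h2 : HasDerivAt (fun u : ℝ => -(x ^ 2) / (2 * u)) (x ^ 2 / (2 * w ^ 2)) w := by
    have h := (hasDerivAt_inv hw.ne').const_mul (-(x ^ 2) / 2)
    have hfun : (fun u : ℝ => -(x ^ 2) / (2 * u)) = fun u : ℝ => -(x ^ 2) / 2 * u⁻¹ := by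
      funext u; ring
    rw [hfun]
    refine h.congr_deriv ?_
    ring
  have h2' := h2.exp
  have h := h1'.mul h2'
  have hfun : (fun u : ℝ => (Real.sqrt (2 * Real.pi * u))⁻¹ * Real.exp (-(x ^ 2) / (2 * u)))
      = fun u => gaussDensityVar u x := by
    funext u; unfold gaussDensityVar; rw [one_div]
  replace h : HasDerivAt (fun u : ℝ => (Real.sqrt (2 * Real.pi * u))⁻¹ * Real.exp (-(x ^ 2) / (2 * u))) _ w := h
  rw [hfun] at h
  have keygen : ∀ s : ℝ, s ≠ 0 → s ^ 2 = 2 * Real.pi * w →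
      -(1 / (2 * s) * (2 * Real.pi)) / s ^ 2 = s⁻¹ * (-(1 / (2 * w))) := by
    intro s hsne hseq
    field_simp
    linear_combination hseq
  have key := keygen _ hs.ne' hsq
  rw [key] at h
  refine h.congr_deriv ?_
  unfold gaussDensityVar
  rw [one_div]
  ring

/-- Price's theorem (1D): the derivative with respect to the variance `v` of the
expectation of `f` under `N(0, v)` is half the expectation of `f''`. -/
theorem price_1d (f : ℝ → ℝ) (hf : ContDiff ℝ 2 f)
    (hfp : PolyGrowth f) (hf'p : PolyGrowth (deriv f))
    (hf''p : PolyGrowth (deriv (deriv f)))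
    (v : ℝ) (hv : 0 < v) :
    HasDerivAt (fun w => ∫ x, f x * gaussDensityVar w x)
      ((1 / 2) * ∫ x, deriv (deriv f) x * gaussDensityVar v x) v := by
  -- regularity of f
  have hf11 : ContDiff ℝ (1 + 1) f := by
    have h : ((1:WithTop ℕ∞) + 1) = 2 := by norm_num
    rwa [h]
  obtain ⟨hdf, -, hf1⟩ := contDiff_succ_iff_deriv.mp hf11
  obtain ⟨hdf', hf''c⟩ := contDiff_one_iff_deriv.mp hf1
  have hfc : Continuous f := hf.continuous
  have hf'c : Continuous (deriv f) := hf1.continuous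
  -- polynomial growth of auxiliary factors
  have pg_P1 : PolyGrowth (fun x : ℝ => -(x / v)) := by
    refine ⟨1 / v, 1, fun x => ?_⟩
    rw [abs_neg, abs_div, abs_of_pos hv]
    have h : |x| ≤ 1 + |x| := by linarith [abs_nonneg x]
    calc |x| / v ≤ (1 + |x|) / v := by gcongr
      _ = 1 / v * (1 + |x|) ^ 1 := by ring
  have pg_P2 : PolyGrowth (fun x : ℝ => x ^ 2 / v ^ 2 - 1 / v) := by
    refine ⟨1 / v ^ 2 + 1 / v, 2, fun x => ?_⟩
    have hA : (0:ℝ) < 1 / v ^ 2 := by positivity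
    have hB : (0:ℝ) < 1 / v := by positivity
    have habs : (0:ℝ) ≤ |x| := abs_nonneg x
    have hsq : x ^ 2 = |x| ^ 2 := (sq_abs x).symm
    show |x ^ 2 / v ^ 2 - 1 / v| ≤ (1 / v ^ 2 + 1 / v) * (1 + |x|) ^ 2
    have hcast : x ^ 2 / v ^ 2 - 1 / v = x ^ 2 * (1 / v ^ 2) - 1 / v := by ring
    rw [hcast]
    apply abs_le.mpr
    constructor <;> nlinarith [mul_nonneg hA.le (sq_nonneg x)]
  -- integrability facts at the fixed variance v
  have I_fN : Integrable fun x => f x * gaussDensityVar v x :=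
    integrable_pg_gauss hfc hfp hv
  have I_fNxx : Integrable fun x => f x * (gaussDensityVar v x * (x ^ 2 / v ^ 2 - 1 / v)) := by
    have h := integrable_pg_gauss (g := fun x => f x * (x ^ 2 / v ^ 2 - 1 / v))
      (by fun_prop) (hfp.mul' pg_P2) hv
    exact h.congr (Filter.Eventually.of_forall fun x => by ring)
  have I_fNx : Integrable fun x => f x * (gaussDensityVar v x * (-(x / v))) := by
    have h := integrable_pg_gauss (g := fun x => f x * (-(x / v)))
      (by fun_prop) (hfp.mul' pg_P1) hv
    exact h.congr (Filter.Eventually.of_forall fun x => by ring)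
  have I_f'Nx : Integrable fun x => deriv f x * (gaussDensityVar v x * (-(x / v))) := by
    have h := integrable_pg_gauss (g := fun x => deriv f x * (-(x / v)))
      (by fun_prop) (hf'p.mul' pg_P1) hv
    exact h.congr (Filter.Eventually.of_forall fun x => by ring)
  have I_f'N : Integrable fun x => deriv f x * gaussDensityVar v x :=
    integrable_pg_gauss hf'c hf'p hv
  have I_f''N : Integrable fun x => deriv (deriv f) x * gaussDensityVar v x :=
    integrable_pg_gauss hf''c hf''p hv
  -- integration by parts, twice
  have ibp1 : ∫ x, f x * (gaussDensityVar v x * (x ^ 2 / v ^ 2 - 1 / v))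
      = - ∫ x, deriv f x * (gaussDensityVar v x * (-(x / v))) :=
    MeasureTheory.integral_mul_deriv_eq_deriv_mul_of_integrable
      (fun x _ => (hdf x).hasDerivAt) (fun x _ => hasDerivAt_gauss_xx hv x)
      I_fNxx I_f'Nx I_fNx
  have ibp2 : ∫ x, deriv f x * (gaussDensityVar v x * (-(x / v)))
      = - ∫ x, deriv (deriv f) x * gaussDensityVar v x :=
    MeasureTheory.integral_mul_deriv_eq_deriv_mul_of_integrable
      (fun x _ => (hdf' x).hasDerivAt) (fun x _ => hasDerivAt_gauss_x hv x)
      I_f'Nx I_f''N I_f'N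
  -- the value of the derivative
  have heat : (∫ x, f x * (gaussDensityVar v x * (x ^ 2 / (2 * v ^ 2) - 1 / (2 * v))))
      = (1 / 2) * ∫ x, deriv (deriv f) x * gaussDensityVar v x := by
    have hpt : (fun x => f x * (gaussDensityVar v x * (x ^ 2 / (2 * v ^ 2) - 1 / (2 * v))))
        = fun x => (1 / 2 : ℝ) * (f x * (gaussDensityVar v x * (x ^ 2 / v ^ 2 - 1 / v))) := by
      funext x; ring
    rw [hpt, MeasureTheory.integral_const_mul, ibp1, ibp2, neg_neg]
  -- the uniform bound on the derivative in w, for w in the ball of radius v/2 around v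
  have hbound_integrable : Integrable (fun x =>
      (|f x| * ((1 / Real.sqrt (Real.pi * v)) * (2 * x ^ 2 / v ^ 2 + 1 / v))) *
        Real.exp (-(1 / (3 * v)) * x ^ 2)) := by
    apply integrable_pg_exp
    · exact (continuous_abs.comp hfc).mul (by fun_prop)
    · apply PolyGrowth.mul'
      · obtain ⟨C, n, hC⟩ := hfp
        exact ⟨C, n, fun x => by rw [abs_abs]; exact hC x⟩
      · refine ⟨(1 / Real.sqrt (Real.pi * v)) * (2 / v ^ 2 + 1 / v), 2, fun x => ?_⟩
        have hc : (0:ℝ) < 1 / Real.sqrt (Real.pi * v) := by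
          have : (0:ℝ) < Real.sqrt (Real.pi * v) := Real.sqrt_pos.mpr (by positivity)
          positivity
        have hpos : (0:ℝ) < 2 * x ^ 2 / v ^ 2 + 1 / v := by positivity
        rw [abs_of_pos (by positivity), mul_assoc]
        apply mul_le_mul_of_nonneg_left _ hc.le
        have hsq : x ^ 2 = |x| ^ 2 := (sq_abs x).symm
        have habs : (0:ℝ) ≤ |x| := abs_nonneg x
        have hA : (0:ℝ) < (v ^ 2)⁻¹ := by positivity
        have hB : (0:ℝ) < v⁻¹ := by positivity
        have h1 : 2 * x ^ 2 / v ^ 2 + 1 / v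
            = 2 * |x| ^ 2 * (v ^ 2)⁻¹ + v⁻¹ := by rw [hsq]; ring
        have h2 : (2 / v ^ 2 + 1 / v) * (1 + |x|) ^ 2
            = 2 * (1 + |x|) ^ 2 * (v ^ 2)⁻¹ + (1 + |x|) ^ 2 * v⁻¹ := by ring
        rw [h1, h2]
        nlinarith [mul_nonneg hA.le (mul_nonneg habs habs),
          mul_nonneg hB.le habs, mul_nonneg hA.le habs]
    · positivity
  have hball : ∀ w ∈ Metric.ball v (v / 2), v / 2 < w ∧ w < 3 * v / 2 := by
    intro w hw
    rw [Metric.mem_ball, Real.dist_eq, abs_lt] at hw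
    constructor <;> linarith [hw.1, hw.2]
  have h_bound : ∀ᵐ x : ℝ, ∀ w ∈ Metric.ball v (v / 2),
      ‖f x * (gaussDensityVar w x * (x ^ 2 / (2 * w ^ 2) - 1 / (2 * w)))‖ ≤
        (|f x| * ((1 / Real.sqrt (Real.pi * v)) * (2 * x ^ 2 / v ^ 2 + 1 / v))) *
          Real.exp (-(1 / (3 * v)) * x ^ 2) := by
    refine Filter.Eventually.of_forall fun x => fun w hw => ?_
    obtain ⟨hw1, hw2⟩ := hball w hw
    have hwpos : 0 < w := lt_trans (by positivity) hw1
    have hNpos : 0 < gaussDensityVar w x := gauss_pos hwpos x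
    have key1 : gaussDensityVar w x ≤
        (1 / Real.sqrt (Real.pi * v)) * Real.exp (-(1 / (3 * v)) * x ^ 2) := by
      unfold gaussDensityVar
      have hs1 : (0:ℝ) < Real.sqrt (Real.pi * v) := Real.sqrt_pos.mpr (by positivity)
      have hsle : Real.sqrt (Real.pi * v) ≤ Real.sqrt (2 * Real.pi * w) := by
        apply Real.sqrt_le_sqrt
        nlinarith [Real.pi_pos]
      have hfrac : 1 / Real.sqrt (2 * Real.pi * w) ≤ 1 / Real.sqrt (Real.pi * v) :=
        one_div_le_one_div_of_le hs1 hsle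
      have hexp : Real.exp (-(x ^ 2) / (2 * w)) ≤ Real.exp (-(1 / (3 * v)) * x ^ 2) := by
        apply Real.exp_le_exp.mpr
        have hdiv : x ^ 2 / (3 * v) ≤ x ^ 2 / (2 * w) :=
          div_le_div_of_nonneg_left (sq_nonneg x) (by positivity) (by linarith)
        have he1 : -(x ^ 2) / (2 * w) = -(x ^ 2 / (2 * w)) := by ring
        have he2 : -(1 / (3 * v)) * x ^ 2 = -(x ^ 2 / (3 * v)) := by ring
        rw [he1, he2]
        exact neg_le_neg hdiv
      calc 1 / Real.sqrt (2 * Real.pi * w) * Real.exp (-(x ^ 2) / (2 * w))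
          ≤ 1 / Real.sqrt (Real.pi * v) * Real.exp (-(x ^ 2) / (2 * w)) := by
            apply mul_le_mul_of_nonneg_right hfrac (Real.exp_pos _).le
        _ ≤ 1 / Real.sqrt (Real.pi * v) * Real.exp (-(1 / (3 * v)) * x ^ 2) := by
            apply mul_le_mul_of_nonneg_left hexp (by positivity)
    have key2 : |x ^ 2 / (2 * w ^ 2) - 1 / (2 * w)| ≤ 2 * x ^ 2 / v ^ 2 + 1 / v := by
      have h1 : |x ^ 2 / (2 * w ^ 2) - 1 / (2 * w)|
          ≤ x ^ 2 / (2 * w ^ 2) + 1 / (2 * w) := by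
        calc |x ^ 2 / (2 * w ^ 2) - 1 / (2 * w)|
            ≤ |x ^ 2 / (2 * w ^ 2)| + |1 / (2 * w)| := abs_sub _ _
          _ = x ^ 2 / (2 * w ^ 2) + 1 / (2 * w) := by
              rw [abs_of_nonneg (by positivity), abs_of_pos (by positivity)]
      have h2 : x ^ 2 / (2 * w ^ 2) ≤ 2 * x ^ 2 / v ^ 2 := by
        rcases eq_or_ne x 0 with hx | hx
        · simp [hx]
        · have hx2 : (0:ℝ) < x ^ 2 := by positivity
          have hw2 : v ^ 2 / 2 ≤ 2 * w ^ 2 := by nlinarith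
          calc x ^ 2 / (2 * w ^ 2) ≤ x ^ 2 / (v ^ 2 / 2) :=
                div_le_div_of_nonneg_left (sq_nonneg x) (by positivity) hw2
            _ = 2 * x ^ 2 / v ^ 2 := by ring
      have h3 : 1 / (2 * w) ≤ 1 / v := by
        apply one_div_le_one_div_of_le hv
        linarith
      linarith
    rw [Real.norm_eq_abs, abs_mul, abs_mul, abs_of_pos hNpos]
    calc |f x| * (gaussDensityVar w x * |x ^ 2 / (2 * w ^ 2) - 1 / (2 * w)|)
        ≤ |f x| * (((1 / Real.sqrt (Real.pi * v)) * Real.exp (-(1 / (3 * v)) * x ^ 2)) *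
            (2 * x ^ 2 / v ^ 2 + 1 / v)) := by
          apply mul_le_mul_of_nonneg_left _ (abs_nonneg _)
          apply mul_le_mul key1 key2 (abs_nonneg _) (by positivity)
      _ = (|f x| * ((1 / Real.sqrt (Real.pi * v)) * (2 * x ^ 2 / v ^ 2 + 1 / v))) *
            Real.exp (-(1 / (3 * v)) * x ^ 2) := by ring
  have h_diff : ∀ᵐ x : ℝ, ∀ w ∈ Metric.ball v (v / 2),
      HasDerivAt (fun w => f x * gaussDensityVar w x)
        (f x * (gaussDensityVar w x * (x ^ 2 / (2 * w ^ 2) - 1 / (2 * w)))) w := by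
    refine Filter.Eventually.of_forall fun x => fun w hw => ?_
    obtain ⟨hw1, _⟩ := hball w hw
    have hwpos : 0 < w := lt_trans (by positivity) hw1
    exact (hasDerivAt_gauss_w x hwpos).const_mul (f x)
  have hmain := hasDerivAt_integral_of_dominated_loc_of_deriv_le
    (F := fun w x => f x * gaussDensityVar w x)
    (F' := fun w x => f x * (gaussDensityVar w x * (x ^ 2 / (2 * w ^ 2) - 1 / (2 * w))))
    (x₀ := v) (s := Metric.ball v (v / 2)) (Metric.ball_mem_nhds v (by positivity))
    (Filter.Eventually.of_forall fun w =>
      (hfc.mul (gauss_continuous w)).aestronglyMeasurable)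
    I_fN
    ((hfc.mul ((gauss_continuous v).mul (by fun_prop))).aestronglyMeasurable)
    h_bound hbound_integrable h_diff
  rw [heat] at hmain
  exact hmain.2
end

section
/- Square-root factorization of rank-one corrected covariance: Let D be diagonal with positive entries, u ∈ ℝᵏ with u ≠ 0, η = 1/(uᵀ D⁻¹ u + 1), and R = D^{-1/2} - [(1 - √η)/(uᵀ D⁻¹ u)] D⁻¹ u uᵀ D^{-1/2}. Then R Rᵀ = D⁻¹ - η D⁻¹ u uᵀ D⁻¹ = (D + u uᵀ)⁻¹. -/
open Matrix


lemma vmv_mul_mul_vmv {k : ℕ} (u : Fin k → ℝ) (X : Matrix (Fin k) (Fin k) ℝ) :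
    vecMulVec u u * X * vecMulVec u u = (dotProduct u (X.mulVec u)) • vecMulVec u u := by
  ext i j
  simp only [mul_apply, vecMulVec_apply, Matrix.smul_apply, smul_eq_mul, dotProduct, mulVec,
    Finset.sum_mul, Finset.mul_sum]
  rw [Finset.sum_comm]
  congr 1; ext m; congr 1; ext l; ring

lemma vmv_transpose {k : ℕ} (u : Fin k → ℝ) : (vecMulVec u u)ᵀ = vecMulVec u u := by
  ext i j; simp [vecMulVec_apply, mul_comm]

/-- Square-root factorization of the rank-one corrected covariance:
with `D = diag d` (`d > 0`), `u ≠ 0`, `η = 1/(uᵀ D⁻¹ u + 1)` and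
`R = D^{-1/2} - [(1 - √η)/(uᵀ D⁻¹ u)] D⁻¹ u uᵀ D^{-1/2}`, one has
`R Rᵀ = D⁻¹ - η D⁻¹ u uᵀ D⁻¹ = (D + u uᵀ)⁻¹`. -/
theorem rank_one_sqrt_factorization {k : ℕ} (d : Fin k → ℝ)
    (hd : ∀ i, 0 < d i) (u : Fin k → ℝ) (hu : u ≠ 0) :
    let D : Matrix (Fin k) (Fin k) ℝ := Matrix.diagonal d
    let Dhalf : Matrix (Fin k) (Fin k) ℝ :=
      Matrix.diagonal (fun i => 1 / Real.sqrt (d i))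
    let η : ℝ := 1 / (dotProduct u (D⁻¹.mulVec u) + 1)
    let R : Matrix (Fin k) (Fin k) ℝ :=
      Dhalf - ((1 - Real.sqrt η) / dotProduct u (D⁻¹.mulVec u)) •
        (D⁻¹ * vecMulVec u u * Dhalf)
    R * Rᵀ = D⁻¹ - η • (D⁻¹ * vecMulVec u u * D⁻¹) ∧
      R * Rᵀ = (D + vecMulVec u u)⁻¹ := by
  intro D Dhalf η R
  have hDD : D * Matrix.diagonal (fun i => (d i)⁻¹) = 1 := by
    rw [show D = Matrix.diagonal d from rfl, diagonal_mul_diagonal]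
    convert Matrix.diagonal_one with i
    exact mul_inv_cancel₀ (hd i).ne'
  have hDinv : D⁻¹ = Matrix.diagonal (fun i => (d i)⁻¹) := inv_eq_right_inv hDD
  have hDDinv : D * D⁻¹ = 1 := by rw [hDinv]; exact hDD
  set V : Matrix (Fin k) (Fin k) ℝ := vecMulVec u u with hVdef
  set s : ℝ := dotProduct u (D⁻¹.mulVec u) with hsdef
  have hs_eq : s = ∑ i, u i * ((d i)⁻¹ * u i) := by
    rw [hsdef, hDinv]
    simp [dotProduct, mulVec_diagonal]
  have hterm : ∀ i, u i * ((d i)⁻¹ * u i) = (u i)^2 * (d i)⁻¹ := fun i => by ring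
  have hs_pos : 0 < s := by
    obtain ⟨i0, hi0⟩ : ∃ i, u i ≠ 0 := by
      by_contra h; push_neg at h; exact hu (funext h)
    rw [hs_eq]
    refine Finset.sum_pos' (fun i _ => ?_) ⟨i0, Finset.mem_univ i0, ?_⟩
    · rw [hterm i]; exact mul_nonneg (sq_nonneg _) (inv_nonneg.2 (hd i).le)
    · rw [hterm i0]
      exact mul_pos (by positivity) (inv_pos.2 (hd i0))
  have hη : η = 1 / (s + 1) := rfl
  have hη_pos : 0 < η := by rw [hη]; positivity
  have h2 : η * (s + 1) = 1 := by rw [hη]; field_simp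
  have hsq : Real.sqrt η * Real.sqrt η = η := Real.mul_self_sqrt hη_pos.le
  set c : ℝ := (1 - Real.sqrt η) / s with hcdef
  have key : 2 * c - c ^ 2 * s = η := by
    rw [hcdef]
    field_simp
    nlinarith [hsq, h2]
  have hDh2 : Dhalf * Dhalf = D⁻¹ := by
    rw [hDinv, show Dhalf = Matrix.diagonal (fun i => 1 / Real.sqrt (d i)) from rfl,
      diagonal_mul_diagonal]
    refine congrArg Matrix.diagonal (funext fun i => ?_)
    rw [div_mul_div_comm, one_mul, Real.mul_self_sqrt (hd i).le, one_div]
  have hDinvT : D⁻¹ᵀ = D⁻¹ := by rw [hDinv]; exact diagonal_transpose _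
  have hDhT : Dhalfᵀ = Dhalf := diagonal_transpose _
  have hVDV : V * D⁻¹ * V = s • V := vmv_mul_mul_vmv u D⁻¹
  set M : Matrix (Fin k) (Fin k) ℝ := D⁻¹ * V * D⁻¹ with hMdef
  set N : Matrix (Fin k) (Fin k) ℝ := D⁻¹ * V * Dhalf with hNdef
  have hNT : Nᵀ = Dhalf * V * D⁻¹ := by
    rw [hNdef, transpose_mul, transpose_mul, hDinvT, hDhT, vmv_transpose, Matrix.mul_assoc]
  have hRT : Rᵀ = Dhalf - c • Nᵀ := by
    show (Dhalf - c • N)ᵀ = _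
    rw [transpose_sub, transpose_smul, hDhT]
  have e1 : Dhalf * Nᵀ = M := by
    rw [hNT, hMdef, ← Matrix.mul_assoc, ← Matrix.mul_assoc, hDh2]
  have e2 : N * Dhalf = M := by
    rw [hNdef, hMdef, Matrix.mul_assoc, Matrix.mul_assoc, hDh2, ← Matrix.mul_assoc]
  have e3 : N * Nᵀ = s • M := by
    rw [hNdef, hNT]
    simp only [← Matrix.mul_assoc]
    rw [Matrix.mul_assoc (D⁻¹ * V) Dhalf Dhalf, hDh2,
      Matrix.mul_assoc D⁻¹ V D⁻¹, Matrix.mul_assoc D⁻¹ (V * D⁻¹) V,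
      hVDV, Matrix.mul_smul, Matrix.smul_mul, hMdef]
  have main : R * Rᵀ = D⁻¹ - η • M := by
    rw [hRT, show R = Dhalf - c • N from rfl]
    rw [sub_mul, mul_sub, mul_sub, Matrix.mul_smul, Matrix.smul_mul, Matrix.smul_mul,
      Matrix.mul_smul, hDh2, e1, e2, e3]
    rw [show D⁻¹ - c • M - (c • M - c • (c • (s • M))) = D⁻¹ - (2 * c - c ^ 2 * s) • M by
      module]
    rw [key]
  refine ⟨main, main.trans ?_⟩
  symm
  apply inv_eq_right_inv
  have hDM : D * M = V * D⁻¹ := by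
    rw [hMdef]
    simp only [← Matrix.mul_assoc]
    rw [hDDinv, Matrix.one_mul]
  have hVM : V * M = s • (V * D⁻¹) := by
    rw [hMdef, ← Matrix.mul_assoc, ← Matrix.mul_assoc, hVDV, Matrix.smul_mul]
  rw [add_mul, mul_sub, mul_sub, Matrix.mul_smul, Matrix.mul_smul, hDDinv, hDM, hVM]
  have hco : η + η * s = 1 := by nlinarith [h2]
  rw [show (1 : Matrix (Fin k) (Fin k) ℝ) - η • (V * D⁻¹) + (V * D⁻¹ - η • (s • (V * D⁻¹)))
      = 1 + (1 - (η + η * s)) • (V * D⁻¹) by module, hco]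
  simp
end

section
/- Variance of the REINFORCE mean-gradient estimator for a quadratic: Let ξ ∼ N(μ, σ²) and f(ξ) = c ξ²/2. Then Var[((ξ - μ)/σ²)(f(ξ) - E[f(ξ)])] = 2 c² μ² + (5/2) c² σ². -/
open MeasureTheory ProbabilityTheory

section Aux

open Real
open scoped NNReal ENNReal

private lemma integrable_pow_gauss {b : ℝ} (hb : 0 < b) (n : ℕ) :
    Integrable fun x : ℝ => x ^ n * rexp (-b * x ^ 2) := by
  have h := integrable_rpow_mul_exp_neg_mul_sq hb
    (s := (n : ℝ)) (lt_of_lt_of_le neg_one_lt_zero (Nat.cast_nonneg n))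
  simpa [Real.rpow_natCast] using h

private lemma gauss_J0 {b : ℝ} (hb : 0 < b) :
    ∫ x : ℝ, x ^ 0 * rexp (-b * x ^ 2) = Real.sqrt (π / b) := by
  simp only [pow_zero, one_mul]
  exact integral_gaussian b

private lemma gauss_J1 {b : ℝ} (hb : 0 < b) :
    ∫ x : ℝ, x ^ 1 * rexp (-b * x ^ 2) = 0 := by
  have hF : ∀ x : ℝ, HasDerivAt (fun x : ℝ => -(2 * b)⁻¹ * rexp (-b * x ^ 2))
      (x ^ 1 * rexp (-b * x ^ 2)) x := by
    intro x
    have h2 : HasDerivAt (fun x : ℝ => -b * x ^ 2) (-b * (2 * x)) x := by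
      simpa using (hasDerivAt_pow 2 x).const_mul (-b)
    have h3 := (h2.exp).const_mul (-(2 * b)⁻¹)
    have hd : -(2 * b)⁻¹ * (rexp (-b * x ^ 2) * (-b * (2 * x)))
        = x ^ 1 * rexp (-b * x ^ 2) := by
      field_simp
    rw [← hd]
    exact h3
  exact integral_eq_zero_of_hasDerivAt_of_integrable hF (integrable_pow_gauss hb 1)
    ((integrable_exp_neg_mul_sq hb).const_mul _)

private lemma gauss_rec {b : ℝ} (hb : 0 < b) (n : ℕ) :
    ∫ x : ℝ, x ^ (n + 2) * rexp (-b * x ^ 2)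
      = ((n : ℝ) + 1) / (2 * b) * ∫ x : ℝ, x ^ n * rexp (-b * x ^ 2) := by
  have hF : ∀ x : ℝ, HasDerivAt (fun x : ℝ => x ^ (n + 1) * rexp (-b * x ^ 2))
      (((n : ℝ) + 1) * (x ^ n * rexp (-b * x ^ 2))
        - 2 * b * (x ^ (n + 2) * rexp (-b * x ^ 2))) x := by
    intro x
    have h1 : HasDerivAt (fun x : ℝ => x ^ (n + 1)) (((n : ℝ) + 1) * x ^ n) x := by
      simpa using hasDerivAt_pow (n + 1) x
    have h2 : HasDerivAt (fun x : ℝ => -b * x ^ 2) (-b * (2 * x)) x := by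
      simpa using (hasDerivAt_pow 2 x).const_mul (-b)
    have h3 := h1.mul h2.exp
    have hd : ((n : ℝ) + 1) * x ^ n * rexp (-b * x ^ 2)
          + x ^ (n + 1) * (rexp (-b * x ^ 2) * (-b * (2 * x)))
        = ((n : ℝ) + 1) * (x ^ n * rexp (-b * x ^ 2))
          - 2 * b * (x ^ (n + 2) * rexp (-b * x ^ 2)) := by
      ring
    rw [← hd]
    exact h3
  have h1 := (integrable_pow_gauss hb n).const_mul ((n : ℝ) + 1)
  have h2 := (integrable_pow_gauss hb (n + 2)).const_mul (2 * b)
  have h0 := integral_eq_zero_of_hasDerivAt_of_integrable hF (h1.sub h2)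
    (integrable_pow_gauss hb (n + 1))
  rw [integral_sub h1 h2, integral_const_mul, integral_const_mul, sub_eq_zero] at h0
  have hb' : (2 * b) ≠ 0 := by positivity
  rw [div_mul_eq_mul_div, eq_div_iff hb', mul_comm]
  exact h0.symm

private lemma gauss_J2 {b : ℝ} (hb : 0 < b) :
    ∫ x : ℝ, x ^ 2 * rexp (-b * x ^ 2) = Real.sqrt (π / b) / (2 * b) := by
  have h := gauss_rec hb 0
  rw [gauss_J0 hb] at h
  norm_num at h
  simp only [neg_mul]
  rw [h]
  ring

private lemma gauss_J3 {b : ℝ} (hb : 0 < b) :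
    ∫ x : ℝ, x ^ 3 * rexp (-b * x ^ 2) = 0 := by
  have h := gauss_rec hb 1
  rw [gauss_J1 hb] at h
  norm_num at h
  simp only [neg_mul]
  exact h

private lemma gauss_J4 {b : ℝ} (hb : 0 < b) :
    ∫ x : ℝ, x ^ 4 * rexp (-b * x ^ 2) = 3 * Real.sqrt (π / b) / (2 * b) ^ 2 := by
  have h := gauss_rec hb 2
  rw [gauss_J2 hb] at h
  norm_num at h
  simp only [neg_mul]
  rw [h]
  ring

private lemma gauss_J5 {b : ℝ} (hb : 0 < b) :
    ∫ x : ℝ, x ^ 5 * rexp (-b * x ^ 2) = 0 := by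
  have h := gauss_rec hb 3
  rw [gauss_J3 hb] at h
  norm_num at h
  simp only [neg_mul]
  exact h

private lemma gauss_J6 {b : ℝ} (hb : 0 < b) :
    ∫ x : ℝ, x ^ 6 * rexp (-b * x ^ 2) = 15 * Real.sqrt (π / b) / (2 * b) ^ 3 := by
  have h := gauss_rec hb 4
  rw [gauss_J4 hb] at h
  norm_num at h
  simp only [neg_mul]
  rw [h]
  ring

private lemma integrable_gauss_poly {b : ℝ} (hb : 0 < b) (a0 a1 a2 a3 a4 a5 a6 : ℝ) :
    Integrable fun x : ℝ => rexp (-b * x ^ 2) *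
        (a0 + a1 * x + a2 * x ^ 2 + a3 * x ^ 3 + a4 * x ^ 4 + a5 * x ^ 5 + a6 * x ^ 6) := by
  have key : (fun x : ℝ => rexp (-b * x ^ 2) *
        (a0 + a1 * x + a2 * x ^ 2 + a3 * x ^ 3 + a4 * x ^ 4 + a5 * x ^ 5 + a6 * x ^ 6))
      = fun x : ℝ =>
        a0 * (x ^ 0 * rexp (-b * x ^ 2)) + a1 * (x ^ 1 * rexp (-b * x ^ 2))
        + a2 * (x ^ 2 * rexp (-b * x ^ 2)) + a3 * (x ^ 3 * rexp (-b * x ^ 2))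
        + a4 * (x ^ 4 * rexp (-b * x ^ 2)) + a5 * (x ^ 5 * rexp (-b * x ^ 2))
        + a6 * (x ^ 6 * rexp (-b * x ^ 2)) := by
    funext x
    ring
  rw [key]
  exact (((((((integrable_pow_gauss hb 0).const_mul a0).add
    ((integrable_pow_gauss hb 1).const_mul a1)).add
    ((integrable_pow_gauss hb 2).const_mul a2)).add
    ((integrable_pow_gauss hb 3).const_mul a3)).add
    ((integrable_pow_gauss hb 4).const_mul a4)).add
    ((integrable_pow_gauss hb 5).const_mul a5)).add
    ((integrable_pow_gauss hb 6).const_mul a6)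

private lemma integral_gauss_poly {b : ℝ} (hb : 0 < b) (a0 a1 a2 a3 a4 a5 a6 : ℝ) :
    ∫ x : ℝ, rexp (-b * x ^ 2) *
        (a0 + a1 * x + a2 * x ^ 2 + a3 * x ^ 3 + a4 * x ^ 4 + a5 * x ^ 5 + a6 * x ^ 6)
      = (a0 + a2 / (2 * b) + a4 * 3 / (2 * b) ^ 2 + a6 * 15 / (2 * b) ^ 3)
          * Real.sqrt (π / b) := by
  have I : ∀ k : ℕ, ∀ a : ℝ, Integrable fun x : ℝ => a * (x ^ k * rexp (-b * x ^ 2)) :=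
    fun k a => (integrable_pow_gauss hb k).const_mul a
  have I2 : ∀ k : ℕ, ∀ a a' : ℝ, Integrable fun x : ℝ =>
      a * (x ^ k * rexp (-b * x ^ 2)) + a' * (x ^ (k + 1) * rexp (-b * x ^ 2)) := by
    intro k a a'
    exact (I k a).add (I (k + 1) a')
  have key : (fun x : ℝ => rexp (-b * x ^ 2) *
        (a0 + a1 * x + a2 * x ^ 2 + a3 * x ^ 3 + a4 * x ^ 4 + a5 * x ^ 5 + a6 * x ^ 6))
      = fun x : ℝ =>
        a0 * (x ^ 0 * rexp (-b * x ^ 2)) + a1 * (x ^ 1 * rexp (-b * x ^ 2))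
        + a2 * (x ^ 2 * rexp (-b * x ^ 2)) + a3 * (x ^ 3 * rexp (-b * x ^ 2))
        + a4 * (x ^ 4 * rexp (-b * x ^ 2)) + a5 * (x ^ 5 * rexp (-b * x ^ 2))
        + a6 * (x ^ 6 * rexp (-b * x ^ 2)) := by
    funext x
    ring
  have S1 : Integrable fun x : ℝ =>
      a0 * (x ^ 0 * rexp (-b * x ^ 2)) + a1 * (x ^ 1 * rexp (-b * x ^ 2)) :=
    (I 0 a0).add (I 1 a1)
  have S2 : Integrable fun x : ℝ =>
      a0 * (x ^ 0 * rexp (-b * x ^ 2)) + a1 * (x ^ 1 * rexp (-b * x ^ 2))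
      + a2 * (x ^ 2 * rexp (-b * x ^ 2)) := S1.add (I 2 a2)
  have S3 : Integrable fun x : ℝ =>
      a0 * (x ^ 0 * rexp (-b * x ^ 2)) + a1 * (x ^ 1 * rexp (-b * x ^ 2))
      + a2 * (x ^ 2 * rexp (-b * x ^ 2)) + a3 * (x ^ 3 * rexp (-b * x ^ 2)) :=
    S2.add (I 3 a3)
  have S4 : Integrable fun x : ℝ =>
      a0 * (x ^ 0 * rexp (-b * x ^ 2)) + a1 * (x ^ 1 * rexp (-b * x ^ 2))
      + a2 * (x ^ 2 * rexp (-b * x ^ 2)) + a3 * (x ^ 3 * rexp (-b * x ^ 2))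
      + a4 * (x ^ 4 * rexp (-b * x ^ 2)) := S3.add (I 4 a4)
  have S5 : Integrable fun x : ℝ =>
      a0 * (x ^ 0 * rexp (-b * x ^ 2)) + a1 * (x ^ 1 * rexp (-b * x ^ 2))
      + a2 * (x ^ 2 * rexp (-b * x ^ 2)) + a3 * (x ^ 3 * rexp (-b * x ^ 2))
      + a4 * (x ^ 4 * rexp (-b * x ^ 2)) + a5 * (x ^ 5 * rexp (-b * x ^ 2)) :=
    S4.add (I 5 a5)
  rw [key, integral_add S5 (I 6 a6), integral_add S4 (I 5 a5), integral_add S3 (I 4 a4),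
    integral_add S2 (I 3 a3), integral_add S1 (I 2 a2), integral_add (I 0 a0) (I 1 a1)]
  simp only [integral_const_mul]
  rw [gauss_J0 hb, gauss_J1 hb, gauss_J2 hb, gauss_J3 hb, gauss_J4 hb, gauss_J5 hb, gauss_J6 hb]
  have hb' : (2 * b) ≠ 0 := by positivity
  field_simp
  ring

private lemma pdf_eq (μ : ℝ) (v : ℝ≥0) (x : ℝ) :
    gaussianPDFReal μ v x
      = (Real.sqrt (2 * π * v))⁻¹ * rexp (-(2 * (v : ℝ))⁻¹ * (x - μ) ^ 2) := by
  rw [gaussianPDFReal, neg_div, div_eq_inv_mul, ← neg_mul]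

private lemma integral_gaussianReal_eq {μ : ℝ} {v : ℝ≥0} (hv : v ≠ 0) (g : ℝ → ℝ) :
    ∫ x, g x ∂(gaussianReal μ v)
      = (Real.sqrt (2 * π * v))⁻¹
          * ∫ x : ℝ, rexp (-(2 * (v : ℝ))⁻¹ * x ^ 2) * g (x + μ) := by
  rw [gaussianReal_of_var_ne_zero _ hv]
  have hpdf : gaussianPDF μ v
      = fun x => ((Real.toNNReal (gaussianPDFReal μ v x) : ℝ≥0) : ℝ≥0∞) := rfl
  rw [hpdf, integral_withDensity_eq_integral_smul
    ((measurable_gaussianPDFReal μ v).real_toNNReal) g]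
  have h1 : (fun x => Real.toNNReal (gaussianPDFReal μ v x) • g x)
      = fun x => gaussianPDFReal μ v x * g x := by
    funext x
    rw [NNReal.smul_def, Real.coe_toNNReal _ (gaussianPDFReal_nonneg μ v x), smul_eq_mul]
  rw [h1, ← integral_add_right_eq_self (fun x => gaussianPDFReal μ v x * g x) μ]
  have h2 : (fun x : ℝ => gaussianPDFReal μ v (x + μ) * g (x + μ))
      = fun x : ℝ => (Real.sqrt (2 * π * v))⁻¹
          * (rexp (-(2 * (v : ℝ))⁻¹ * x ^ 2) * g (x + μ)) := by
    funext x
    rw [pdf_eq, add_sub_cancel_right, mul_assoc]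
  rw [h2, integral_const_mul]

private lemma integrable_gaussianReal {μ : ℝ} {v : ℝ≥0} (hv : v ≠ 0) {g : ℝ → ℝ}
    (hg : Integrable fun x : ℝ => rexp (-(2 * (v : ℝ))⁻¹ * x ^ 2) * g (x + μ)) :
    Integrable g (gaussianReal μ v) := by
  rw [gaussianReal_of_var_ne_zero _ hv]
  have hpdf : gaussianPDF μ v
      = fun x => ((Real.toNNReal (gaussianPDFReal μ v x) : ℝ≥0) : ℝ≥0∞) := rfl
  rw [hpdf, integrable_withDensity_iff_integrable_smul
    ((measurable_gaussianPDFReal μ v).real_toNNReal)]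
  have h := (hg.comp_sub_right μ).const_mul (Real.sqrt (2 * π * (v : ℝ)))⁻¹
  have h2 : (fun x : ℝ => (Real.sqrt (2 * π * (v : ℝ)))⁻¹
        * (rexp (-(2 * (v : ℝ))⁻¹ * (x - μ) ^ 2) * g ((x - μ) + μ)))
      = fun x => Real.toNNReal (gaussianPDFReal μ v x) • g x := by
    funext x
    rw [NNReal.smul_def, Real.coe_toNNReal _ (gaussianPDFReal_nonneg μ v x), smul_eq_mul,
      pdf_eq, sub_add_cancel]
    ring
  rw [← h2]
  exact h

end Aux

open scoped NNReal ENNReal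

open Real in
/-- Variance of the REINFORCE mean-gradient estimator for `f(ξ) = c ξ²/2`
under `ξ ∼ N(μ, σ²)`:
`Var[((ξ - μ)/σ²)(f(ξ) - E[f(ξ)])] = 2 c² μ² + (5 / 2) c² σ²`. -/
theorem reinforce_mean_estimator_variance (μ σ c : ℝ) (hσ : 0 < σ) :
    variance
      (fun x => ((x - μ) / σ ^ 2) *
        (c * x ^ 2 / 2 -
          ∫ y, c * y ^ 2 / 2 ∂(gaussianReal μ ⟨σ ^ 2, sq_nonneg σ⟩)))
      (gaussianReal μ ⟨σ ^ 2, sq_nonneg σ⟩) =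
      2 * c ^ 2 * μ ^ 2 + (5 / 2) * c ^ 2 * σ ^ 2 := by
  have hv2 : (0 : ℝ) < σ ^ 2 := by positivity
  set v : ℝ≥0 := ⟨σ ^ 2, sq_nonneg σ⟩ with hvdef
  have hvc : (v : ℝ) = σ ^ 2 := rfl
  have hv : v ≠ 0 := by
    refine fun h => (ne_of_gt hv2) ?_
    rw [← hvc, h, NNReal.coe_zero]
  set b : ℝ := (2 * σ ^ 2)⁻¹ with hbdef
  have hb : 0 < b := by rw [hbdef]; positivity
  have hbv : (2 * (v : ℝ))⁻¹ = b := by rw [hvc]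
  have hS : (0 : ℝ) < Real.sqrt (2 * π * σ ^ 2) := by
    apply Real.sqrt_pos.2
    positivity
  have hsqrt : Real.sqrt (π / b) = Real.sqrt (2 * π * σ ^ 2) := by
    congr 1
    rw [hbdef]
    field_simp
  have hσ2 : (σ : ℝ) ^ 2 ≠ 0 := ne_of_gt hv2
  -- The expectation of f
  have hE : ∫ y, c * y ^ 2 / 2 ∂(gaussianReal μ v) = c * (μ ^ 2 + σ ^ 2) / 2 := by
    rw [integral_gaussianReal_eq hv]
    have h1 : ∀ x : ℝ, rexp (-(2 * (v : ℝ))⁻¹ * x ^ 2) * (c * (x + μ) ^ 2 / 2)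
        = rexp (-b * x ^ 2) *
            (c * μ ^ 2 / 2 + (c * μ) * x + (c / 2) * x ^ 2 + 0 * x ^ 3 + 0 * x ^ 4
              + 0 * x ^ 5 + 0 * x ^ 6) := by
      intro x
      rw [hbv]
      ring
    simp only [h1]
    rw [integral_gauss_poly hb, hsqrt, hvc]
    rw [mul_comm _ (Real.sqrt (2 * π * σ ^ 2)), ← mul_assoc,
      inv_mul_cancel₀ (ne_of_gt hS), one_mul]
    have h2b : 2 * b = (σ ^ 2)⁻¹ := by
      rw [hbdef, mul_inv, ← mul_assoc, mul_inv_cancel₀ two_ne_zero, one_mul]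
    rw [h2b]
    field_simp
    ring
  simp only [hE]
  -- The estimator
  set g : ℝ → ℝ := fun x => ((x - μ) / σ ^ 2) * (c * x ^ 2 / 2 - c * (μ ^ 2 + σ ^ 2) / 2)
    with hgdef
  have hg1 : ∀ x : ℝ, rexp (-(2 * (v : ℝ))⁻¹ * x ^ 2) * g (x + μ)
      = rexp (-b * x ^ 2) *
          (0 + (-(c / 2)) * x + (c * μ / σ ^ 2) * x ^ 2 + (c / (2 * σ ^ 2)) * x ^ 3
            + 0 * x ^ 4 + 0 * x ^ 5 + 0 * x ^ 6) := by
    intro x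
    rw [hbv, hgdef]
    field_simp
    ring
  have hg2 : ∀ x : ℝ, rexp (-(2 * (v : ℝ))⁻¹ * x ^ 2) * (g (x + μ)) ^ 2
      = rexp (-b * x ^ 2) *
          (0 + 0 * x + (c ^ 2 / 4) * x ^ 2 + (-(c ^ 2 * μ / σ ^ 2)) * x ^ 3
            + (c ^ 2 * (4 * μ ^ 2 - 2 * σ ^ 2) / (4 * σ ^ 4)) * x ^ 4
            + (c ^ 2 * μ / σ ^ 4) * x ^ 5 + (c ^ 2 / (4 * σ ^ 4)) * x ^ 6) := by
    intro x
    rw [hbv, hgdef]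
    field_simp
    ring
  -- mean of g
  have hEg : ∫ x, g x ∂(gaussianReal μ v) = c * μ := by
    rw [integral_gaussianReal_eq hv]
    simp only [hg1]
    rw [integral_gauss_poly hb, hsqrt, hvc]
    rw [mul_comm _ (Real.sqrt (2 * π * σ ^ 2)), ← mul_assoc,
      inv_mul_cancel₀ (ne_of_gt hS), one_mul]
    have h2b : 2 * b = (σ ^ 2)⁻¹ := by
      rw [hbdef, mul_inv, ← mul_assoc, mul_inv_cancel₀ two_ne_zero, one_mul]
    rw [h2b]
    field_simp
    ring
  -- second moment of g
  have hEg2 : ∫ x, (g x) ^ 2 ∂(gaussianReal μ v)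
      = 3 * c ^ 2 * μ ^ 2 + (5 / 2) * c ^ 2 * σ ^ 2 := by
    rw [integral_gaussianReal_eq hv (fun x => (g x) ^ 2)]
    simp only [hg2]
    rw [integral_gauss_poly hb, hsqrt, hvc]
    rw [mul_comm _ (Real.sqrt (2 * π * σ ^ 2)), ← mul_assoc,
      inv_mul_cancel₀ (ne_of_gt hS), one_mul]
    have h2b : 2 * b = (σ ^ 2)⁻¹ := by
      rw [hbdef, mul_inv, ← mul_assoc, mul_inv_cancel₀ two_ne_zero, one_mul]
    rw [h2b]
    field_simp
    ring
  -- membership in L2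
  have hgmeas : AEStronglyMeasurable g (gaussianReal μ v) := by
    apply Continuous.aestronglyMeasurable
    rw [hgdef]
    fun_prop
  have hmem : MemLp g 2 (gaussianReal μ v) := by
    rw [memLp_two_iff_integrable_sq hgmeas]
    apply integrable_gaussianReal hv
    simp only [hg2]
    exact integrable_gauss_poly hb _ _ _ _ _ _ _
  rw [variance_eq_sub hmem]
  have hpow : ∫ x, (g ^ 2) x ∂(gaussianReal μ v) = ∫ x, (g x) ^ 2 ∂(gaussianReal μ v) := rfl
  rw [hpow, hEg2, hEg]
  ring
end

section
/- Variance of the scale-gradient estimator for a quadratic: Let ξ ∼ N(μ, σ²), f(ξ) = c ξ²/2, and consider the estimator ((ξ - μ)/σ) f'(ξ) for the gradient with respect to σ. Then Var[((ξ - μ)/σ) c ξ] = 2 c² σ² + μ² c². -/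
open MeasureTheory ProbabilityTheory Real Set
open scoped ENNReal NNReal

lemma integral_comp_neg_real (f : ℝ → ℝ) : ∫ x : ℝ, f (-x) = ∫ x : ℝ, f x := by
  conv_rhs => rw [← Measure.map_neg_eq_self (volume : Measure ℝ)]
  exact (integral_map_equiv (Homeomorph.neg ℝ).toMeasurableEquiv f).symm

lemma J_odd (b : ℝ) (n : ℕ) (hn : Odd n) :
    ∫ x : ℝ, x ^ n * rexp (-b * x ^ 2) = 0 := by
  have h := integral_comp_neg_real (fun x => x ^ n * rexp (-b * x ^ 2))
  simp only [hn.neg_pow, neg_sq, neg_mul] at h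
  rw [integral_neg] at h
  simp only [neg_mul] at h ⊢
  linarith

lemma J_integrable (b : ℝ) (hb : 0 < b) (n : ℕ) :
    Integrable (fun x : ℝ => x ^ n * rexp (-b * x ^ 2)) := by
  have := integrable_rpow_mul_exp_neg_mul_sq hb (s := (n : ℝ))
    (by exact_mod_cast neg_one_lt_zero.trans_le (Nat.cast_nonneg n))
  simpa [Real.rpow_natCast] using this

lemma J_even (b : ℝ) (hb : 0 < b) (k : ℕ) :
    ∫ x : ℝ, x ^ (2 * k) * rexp (-b * x ^ 2)
      = 2 * (b ^ (-(2 * (k:ℝ) + 1) / 2) * (1 / 2) * Gamma ((2 * (k:ℝ) + 1) / 2)) := by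
  have h1 : ∫ x : ℝ, x ^ (2 * k) * rexp (-b * x ^ 2)
      = 2 * ∫ x in Ioi (0:ℝ), x ^ (2 * k) * rexp (-b * x ^ 2) := by
    rw [← integral_comp_abs (f := fun x => x ^ (2 * k) * rexp (-b * x ^ 2))]
    congr 1 with x
    rw [pow_mul, pow_mul, sq_abs]
  rw [h1]
  have h2 := integral_rpow_mul_exp_neg_mul_rpow (p := 2) (q := (2 * k : ℝ)) (b := b)
    (by norm_num) (by exact neg_one_lt_zero.trans_le (by positivity)) hb
  have h3 : ∫ x in Ioi (0:ℝ), x ^ (2 * k) * rexp (-b * x ^ 2)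
      = ∫ x in Ioi (0:ℝ), x ^ ((2 * k : ℕ) : ℝ) * rexp (-b * x ^ ((2:ℕ) : ℝ)) := by
    congr 1 with x
    rw [Real.rpow_natCast, Real.rpow_natCast]
  rw [h3]
  push_cast
  rw [h2]

-- value of J at b = 1/2
lemma J_half_0 : ∫ x : ℝ, rexp (-(1/2 : ℝ) * x ^ 2) = √(2 * π) := by
  rw [integral_gaussian]
  rw [show π / (1/2 : ℝ) = 2 * π by ring]

lemma sqrt_two_pi_pos : 0 < √(2 * π) := Real.sqrt_pos.mpr (by positivity)

lemma rpow_half_eq (y : ℝ) : ((1:ℝ)/2) ^ (-y) = (2:ℝ) ^ y := by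
  rw [one_div, Real.inv_rpow (by norm_num), ← Real.rpow_neg (by norm_num), neg_neg]

lemma J_half_2 : ∫ x : ℝ, x ^ 2 * rexp (-(1/2 : ℝ) * x ^ 2) = √(2 * π) := by
  have h := J_even (1/2) (by norm_num) 1
  norm_num at h
  simp only [neg_mul] at h ⊢
  rw [h]
  have hΓ : Gamma ((3:ℝ)/2) = √π / 2 := by
    rw [show (3:ℝ)/2 = 1/2 + 1 by norm_num, Real.Gamma_add_one (by norm_num),
      Real.Gamma_one_half_eq]; ring
  have hr : ((1:ℝ)/2) ^ (-((3:ℝ)/2)) = 2 * √2 := by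
    rw [rpow_half_eq,
      show (3:ℝ)/2 = 1 + 1/2 by norm_num, Real.rpow_add (by norm_num), Real.rpow_one,
      ← Real.sqrt_eq_rpow]
  rw [hΓ, hr, Real.sqrt_mul (by norm_num : (0:ℝ) ≤ 2)]
  ring

lemma J_half_4 : ∫ x : ℝ, x ^ 4 * rexp (-(1/2 : ℝ) * x ^ 2) = 3 * √(2 * π) := by
  have h := J_even (1/2) (by norm_num) 2
  norm_num at h
  simp only [neg_mul] at h ⊢
  rw [h]
  have hΓ : Gamma ((5:ℝ)/2) = 3 * √π / 4 := by
    rw [show (5:ℝ)/2 = 3/2 + 1 by norm_num, Real.Gamma_add_one (by norm_num),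
      show (3:ℝ)/2 = 1/2 + 1 by norm_num, Real.Gamma_add_one (by norm_num),
      Real.Gamma_one_half_eq]; ring
  have hr : ((1:ℝ)/2) ^ (-((5:ℝ)/2)) = 4 * √2 := by
    rw [rpow_half_eq,
      show (5:ℝ)/2 = 2 + 1/2 by norm_num, Real.rpow_add (by norm_num),
      ← Real.sqrt_eq_rpow,
      show (2:ℝ)^(2:ℝ) = ((2:ℝ)^(2:ℕ) : ℝ) by rw [← Real.rpow_natCast]; norm_num]
    norm_num
  rw [hΓ, hr, Real.sqrt_mul (by norm_num : (0:ℝ) ≤ 2)]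
  ring


lemma pdf01 (x : ℝ) :
    gaussianPDFReal 0 1 x = (√(2 * π))⁻¹ * rexp (-(1/2 : ℝ) * x ^ 2) := by
  simp only [gaussianPDFReal, NNReal.coe_one, mul_one, sub_zero]
  congr 1
  ring

lemma gaussianPDF01_eq :
    gaussianPDF 0 1 = fun x => ((gaussianPDFReal 0 1 x).toNNReal : ℝ≥0∞) := rfl

lemma integral_std (g : ℝ → ℝ) :
    ∫ x, g x ∂(gaussianReal 0 1) = ∫ x, gaussianPDFReal 0 1 x * g x := by
  rw [gaussianReal_of_var_ne_zero 0 one_ne_zero, gaussianPDF01_eq,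
    integral_withDensity_eq_integral_smul ((measurable_gaussianPDFReal 0 1).real_toNNReal) g]
  congr 1 with x
  rw [NNReal.smul_def, Real.coe_toNNReal _ (gaussianPDFReal_nonneg 0 1 x), smul_eq_mul]

lemma integrable_std (g : ℝ → ℝ) :
    Integrable g (gaussianReal 0 1)
      ↔ Integrable (fun x => gaussianPDFReal 0 1 x * g x) volume := by
  rw [gaussianReal_of_var_ne_zero 0 one_ne_zero, gaussianPDF01_eq,
    integrable_withDensity_iff_integrable_smul ((measurable_gaussianPDFReal 0 1).real_toNNReal)]
  have : (fun x => ((gaussianPDFReal 0 1 x).toNNReal : ℝ≥0) • g x)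
      = fun x => gaussianPDFReal 0 1 x * g x := by
    funext x
    rw [NNReal.smul_def, Real.coe_toNNReal _ (gaussianPDFReal_nonneg 0 1 x), smul_eq_mul]
  rw [this]

lemma int_pow_std (n : ℕ) : Integrable (fun x : ℝ => x ^ n) (gaussianReal 0 1) := by
  rw [integrable_std]
  have : (fun x : ℝ => gaussianPDFReal 0 1 x * x ^ n)
      = fun x => (√(2*π))⁻¹ * (x ^ n * rexp (-(1/2 : ℝ) * x ^ 2)) := by
    funext x; rw [pdf01]; ring
  rw [this]
  exact (J_integrable _ (by norm_num) n).const_mul _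

lemma moment_std (n : ℕ) :
    ∫ x, x ^ n ∂(gaussianReal 0 1)
      = (√(2*π))⁻¹ * ∫ x : ℝ, x ^ n * rexp (-(1/2 : ℝ) * x ^ 2) := by
  rw [integral_std]
  have : (fun x : ℝ => gaussianPDFReal 0 1 x * x ^ n)
      = fun x => (√(2*π))⁻¹ * (x ^ n * rexp (-(1/2 : ℝ) * x ^ 2)) := by
    funext x; rw [pdf01]; ring
  rw [this, integral_const_mul]

lemma moment1 : ∫ x, x ^ 1 ∂(gaussianReal 0 1) = 0 := by
  rw [moment_std, J_odd _ 1 odd_one, mul_zero]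

lemma moment3 : ∫ x, x ^ 3 ∂(gaussianReal 0 1) = 0 := by
  rw [moment_std, J_odd _ 3 (by decide), mul_zero]

lemma moment2 : ∫ x, x ^ 2 ∂(gaussianReal 0 1) = 1 := by
  rw [moment_std, J_half_2, inv_mul_cancel₀ sqrt_two_pi_pos.ne']

lemma moment4 : ∫ x, x ^ 4 ∂(gaussianReal 0 1) = 3 := by
  rw [moment_std, J_half_4, ← mul_assoc, mul_comm _ 3, mul_assoc,
    inv_mul_cancel₀ sqrt_two_pi_pos.ne', mul_one]


/-- Variance of the pathwise scale-gradient estimator for `f(ξ) = c ξ²/2`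
under `ξ ∼ N(μ, σ²)`: `Var[((ξ - μ)/σ) c ξ] = 2 c² σ² + μ² c²`. -/
theorem scale_gradient_estimator_variance (μ σ c : ℝ) (hσ : 0 < σ) :
    variance (fun x => ((x - μ) / σ) * (c * x))
        (gaussianReal μ ⟨σ ^ 2, sq_nonneg σ⟩) =
      2 * c ^ 2 * σ ^ 2 + μ ^ 2 * c ^ 2 := by
  have hσ' : σ ≠ 0 := hσ.ne'
  set g : ℝ → ℝ := fun x => ((x - μ) / σ) * (c * x) with hg
  have hT : Measurable fun x : ℝ => σ * x + μ := by fun_prop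
  have hmap : gaussianReal μ ⟨σ ^ 2, sq_nonneg σ⟩
      = (gaussianReal 0 1).map (fun x => σ * x + μ) := by
    have h1 : (gaussianReal 0 1).map (fun x : ℝ => σ * x)
        = gaussianReal 0 ⟨σ ^ 2, sq_nonneg σ⟩ := by
      have := gaussianReal_map_const_mul (μ := 0) (v := 1) σ
      rw [this, mul_zero, mul_one]
      rfl
    have h2 : (fun x : ℝ => σ * x + μ) = (fun y => y + μ) ∘ (fun x : ℝ => σ * x) := rfl
    rw [h2, ← Measure.map_map (measurable_add_const μ) (measurable_const_mul σ), h1]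
    have := gaussianReal_map_add_const (μ := 0) (v := ⟨σ ^ 2, sq_nonneg σ⟩) μ
    rw [zero_add] at this
    rw [← this]
  have hg_cont : Continuous g := by fun_prop
  have hcomp : (fun x : ℝ => g (σ * x + μ)) = fun x => c * σ * x ^ 2 + c * μ * x ^ 1 := by
    funext x
    simp only [hg]
    field_simp
    ring
  have hcomp2 : (fun x : ℝ => g (σ * x + μ) ^ 2)
      = fun x => c ^ 2 * σ ^ 2 * x ^ 4 + (2 * c ^ 2 * σ * μ * x ^ 3 + c ^ 2 * μ ^ 2 * x ^ 2) := by
    funext x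
    simp only [hg]
    field_simp
    ring
  have hint2 : Integrable (fun x : ℝ => g (σ * x + μ) ^ 2) (gaussianReal 0 1) := by
    rw [hcomp2]
    exact ((int_pow_std 4).const_mul _).add
      (((int_pow_std 3).const_mul _).add ((int_pow_std 2).const_mul _))
  have hint1 : Integrable (fun x : ℝ => g (σ * x + μ)) (gaussianReal 0 1) := by
    rw [hcomp]
    exact ((int_pow_std 2).const_mul _).add ((int_pow_std 1).const_mul _)
  have hmem : MemLp g 2 (gaussianReal μ ⟨σ ^ 2, sq_nonneg σ⟩) := by
    rw [hmap]
    refine (memLp_two_iff_integrable_sq hg_cont.aestronglyMeasurable).mpr ?_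
    rw [integrable_map_measure (show Continuous (fun x => g x ^ 2) from
      hg_cont.pow 2).aestronglyMeasurable hT.aemeasurable]
    exact hint2
  rw [@variance_eq_sub _ _ _ (instIsProbabilityMeasureGaussianReal μ _) _ hmem]
  have key2 : ∫ x, (g ^ 2) x ∂(gaussianReal μ ⟨σ ^ 2, sq_nonneg σ⟩)
      = 3 * c ^ 2 * σ ^ 2 + c ^ 2 * μ ^ 2 := by
    simp only [Pi.pow_apply]
    rw [hmap, integral_map hT.aemeasurable
      (show Continuous (fun x => g x ^ 2) from hg_cont.pow 2).aestronglyMeasurable]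
    have i4 : Integrable (fun x : ℝ => c ^ 2 * σ ^ 2 * x ^ 4) (gaussianReal 0 1) :=
      (int_pow_std 4).const_mul _
    have i3 : Integrable (fun x : ℝ => 2 * c ^ 2 * σ * μ * x ^ 3) (gaussianReal 0 1) :=
      (int_pow_std 3).const_mul _
    have i2 : Integrable (fun x : ℝ => c ^ 2 * μ ^ 2 * x ^ 2) (gaussianReal 0 1) :=
      (int_pow_std 2).const_mul _
    have i32 : Integrable (fun x : ℝ => 2 * c ^ 2 * σ * μ * x ^ 3 + c ^ 2 * μ ^ 2 * x ^ 2)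
        (gaussianReal 0 1) := i3.add i2
    rw [hcomp2, integral_add i4 i32, integral_add i3 i2,
      integral_const_mul, integral_const_mul, integral_const_mul, moment4, moment3, moment2]
    ring
  have key1 : ∫ x, g x ∂(gaussianReal μ ⟨σ ^ 2, sq_nonneg σ⟩) = c * σ := by
    rw [hmap, integral_map hT.aemeasurable hg_cont.aestronglyMeasurable, hcomp,
      integral_add ((int_pow_std 2).const_mul (c * σ) :
          Integrable (fun x : ℝ => c * σ * x ^ 2) (gaussianReal 0 1))
        ((int_pow_std 1).const_mul (c * μ) :
          Integrable (fun x : ℝ => c * μ * x ^ 1) (gaussianReal 0 1)),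
      integral_const_mul, integral_const_mul, moment2, moment1]
    ring
  rw [key2, key1]
  ring
end
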